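/- For all ξ, η ∈ ℝ and δ ≥ 0, the quantity m(ξ,η) := (e^{δ⟨ξ⟩^{1/2}} − e^{δ⟨η⟩^{1/2}}) · e^{−δ⟨ξ−η⟩^{1/2} − δ⟨η⟩^{1/2}} satisfies |m(ξ,η)| ≤ δ |ξ−η| / (⟨ξ⟩^{1/2} + ⟨η⟩^{1/2}). -/
import Mathlib

open Real

/-- `x ↦ √(1+x²)` is 1-Lipschitz. -/
lemma jap_lipschitz (x y : ℝ) :
    |Real.sqrt (1 + x ^ 2) - Real.sqrt (1 + y ^ 2)| ≤ |x - y| := by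
  set u := Real.sqrt (1 + x ^ 2) with hu
  set v := Real.sqrt (1 + y ^ 2) with hv
  have hu0 : 0 < u := Real.sqrt_pos.mpr (by positivity)
  have hv0 : 0 < v := Real.sqrt_pos.mpr (by positivity)
  have hu2 : u ^ 2 = 1 + x ^ 2 := Real.sq_sqrt (by positivity)
  have hv2 : v ^ 2 = 1 + y ^ 2 := Real.sq_sqrt (by positivity)
  have hxu : |x| ≤ u := by
    rw [hu]
    rw [show |x| = Real.sqrt (x ^ 2) by rw [Real.sqrt_sq_eq_abs]]
    exact Real.sqrt_le_sqrt (by linarith)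
  have hyv : |y| ≤ v := by
    rw [hv]
    rw [show |y| = Real.sqrt (y ^ 2) by rw [Real.sqrt_sq_eq_abs]]
    exact Real.sqrt_le_sqrt (by linarith)
  have key : |u - v| * (u + v) ≤ |x - y| * (u + v) := by
    have h1 : |u - v| * (u + v) = |u ^ 2 - v ^ 2| := by
      rw [← abs_of_pos (show (0:ℝ) < u + v by linarith), ← abs_mul]
      ring_nf
    have h2 : |u ^ 2 - v ^ 2| = |x - y| * |x + y| := by
      rw [hu2, hv2, ← abs_mul]; ring_nf
    have h3 : |x + y| ≤ u + v := (abs_add_le x y).trans (by linarith)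
    calc |u - v| * (u + v) = |x - y| * |x + y| := by rw [h1, h2]
      _ ≤ |x - y| * (u + v) := by
          exact mul_le_mul_of_nonneg_left h3 (abs_nonneg _)
  exact le_of_mul_le_mul_right key (by linarith)

lemma exp_sub_exp_le (x y : ℝ) :
    |Real.exp x - Real.exp y| ≤ |x - y| * Real.exp (max x y) := by
  wlog h : y ≤ x generalizing x y
  · rw [abs_sub_comm, abs_sub_comm x y, max_comm]
    exact this y x (le_of_not_ge h)
  rw [abs_of_nonneg (sub_nonneg.mpr (Real.exp_le_exp.mpr h)),
    abs_of_nonneg (sub_nonneg.mpr h), max_eq_left h]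
  have ht : 0 ≤ x - y := sub_nonneg.mpr h
  -- e^t - 1 ≤ t e^t  for t = x - y
  have h1 : 1 - (x - y) ≤ Real.exp (-(x - y)) := by
    have := Real.add_one_le_exp (-(x - y)); linarith
  have h2 : Real.exp (x - y) - 1 ≤ (x - y) * Real.exp (x - y) := by
    have hE : 0 < Real.exp (x - y) := Real.exp_pos _
    have := mul_le_mul_of_nonneg_left h1 hE.le
    rw [← Real.exp_add] at this
    simp at this
    nlinarith
  have hEy : 0 < Real.exp y := Real.exp_pos _
  calc Real.exp x - Real.exp y = Real.exp y * (Real.exp (x - y) - 1) := by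
        rw [mul_sub, ← Real.exp_add]; ring_nf
    _ ≤ Real.exp y * ((x - y) * Real.exp (x - y)) :=
        mul_le_mul_of_nonneg_left h2 hEy.le
    _ = (x - y) * (Real.exp y * Real.exp (x - y)) := by ring
    _ = (x - y) * Real.exp x := by rw [← Real.exp_add]; ring_nf

lemma sqrt_add_le' (p q : ℝ) (hp : 0 ≤ p) (hq : 0 ≤ q) :
    Real.sqrt (p + q) ≤ Real.sqrt p + Real.sqrt q := by
  have hsp := Real.sqrt_nonneg p
  have hsq := Real.sqrt_nonneg q
  have h : p + q ≤ (Real.sqrt p + Real.sqrt q) ^ 2 := by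
    nlinarith [Real.sq_sqrt hp, Real.sq_sqrt hq, mul_nonneg hsp hsq]
  calc Real.sqrt (p + q)
      ≤ Real.sqrt ((Real.sqrt p + Real.sqrt q) ^ 2) := Real.sqrt_le_sqrt h
    _ = Real.sqrt p + Real.sqrt q := Real.sqrt_sq (by linarith)

/-- Bound on the symbol `m(ξ,η)` appearing in the commutator estimate. -/
theorem symbol_m_bound (δ : ℝ) (hδ : 0 ≤ δ) (ξ η : ℝ) :
    |(Real.exp (δ * Real.sqrt (Real.sqrt (1 + ξ ^ 2))) -
        Real.exp (δ * Real.sqrt (Real.sqrt (1 + η ^ 2)))) *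
      Real.exp (-(δ * Real.sqrt (Real.sqrt (1 + (ξ - η) ^ 2))) -
        δ * Real.sqrt (Real.sqrt (1 + η ^ 2)))| ≤
      δ * |ξ - η| / (Real.sqrt (Real.sqrt (1 + ξ ^ 2)) + Real.sqrt (Real.sqrt (1 + η ^ 2))) := by
  set a := Real.sqrt (Real.sqrt (1 + ξ ^ 2)) with ha
  set b := Real.sqrt (Real.sqrt (1 + η ^ 2)) with hb
  set c := Real.sqrt (Real.sqrt (1 + (ξ - η) ^ 2)) with hc
  have hsξ : (0:ℝ) ≤ Real.sqrt (1 + ξ ^ 2) := Real.sqrt_nonneg _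
  have hsη : (0:ℝ) ≤ Real.sqrt (1 + η ^ 2) := Real.sqrt_nonneg _
  have ha0 : 0 < a := Real.sqrt_pos.mpr (Real.sqrt_pos.mpr (by positivity))
  have hb0 : 0 < b := Real.sqrt_pos.mpr (Real.sqrt_pos.mpr (by positivity))
  have hc0 : 0 ≤ c := Real.sqrt_nonneg _
  have ha2 : a ^ 2 = Real.sqrt (1 + ξ ^ 2) := Real.sq_sqrt hsξ
  have hb2 : b ^ 2 = Real.sqrt (1 + η ^ 2) := Real.sq_sqrt hsη
  -- triangle inequality: a ≤ c + b
  have htri : a ≤ c + b := by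
    have h1 : Real.sqrt (1 + ξ ^ 2) ≤
        Real.sqrt (1 + (ξ - η) ^ 2) + Real.sqrt (1 + η ^ 2) := by
      have hs1 : (0:ℝ) ≤ 1 + (ξ - η) ^ 2 := by positivity
      have hs2 : (0:ℝ) ≤ 1 + η ^ 2 := by positivity
      have hu2 : Real.sqrt (1 + (ξ - η) ^ 2) ^ 2 = 1 + (ξ - η) ^ 2 := Real.sq_sqrt hs1
      have hv2 : Real.sqrt (1 + η ^ 2) ^ 2 = 1 + η ^ 2 := Real.sq_sqrt hs2
      have huξ : |ξ - η| ≤ Real.sqrt (1 + (ξ - η) ^ 2) := by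
        rw [show |ξ - η| = Real.sqrt ((ξ - η) ^ 2) by rw [Real.sqrt_sq_eq_abs]]
        exact Real.sqrt_le_sqrt (by linarith)
      have hvη : |η| ≤ Real.sqrt (1 + η ^ 2) := by
        rw [show |η| = Real.sqrt (η ^ 2) by rw [Real.sqrt_sq_eq_abs]]
        exact Real.sqrt_le_sqrt (by linarith)
      have hu0 := Real.sqrt_nonneg (1 + (ξ - η) ^ 2)
      have hv0 := Real.sqrt_nonneg (1 + η ^ 2)
      have habs1 : (ξ - η) * η ≤ |ξ - η| * |η| := by
        rw [← abs_mul]; exact le_abs_self _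
      have hsum : 1 + ξ ^ 2 ≤ (Real.sqrt (1 + (ξ - η) ^ 2) + Real.sqrt (1 + η ^ 2)) ^ 2 := by
        nlinarith [mul_le_mul huξ hvη (abs_nonneg η) hu0]
      calc Real.sqrt (1 + ξ ^ 2)
          ≤ Real.sqrt ((Real.sqrt (1 + (ξ - η) ^ 2) + Real.sqrt (1 + η ^ 2)) ^ 2) :=
            Real.sqrt_le_sqrt hsum
        _ = _ := Real.sqrt_sq (by linarith)
    calc a ≤ Real.sqrt (Real.sqrt (1 + (ξ - η) ^ 2) + Real.sqrt (1 + η ^ 2)) :=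
          Real.sqrt_le_sqrt h1
      _ ≤ c + b := sqrt_add_le' _ _ (Real.sqrt_nonneg _) (Real.sqrt_nonneg _)
  -- step 1: bound by δ|a-b|
  have step1 : |(Real.exp (δ * a) - Real.exp (δ * b)) *
      Real.exp (-(δ * c) - δ * b)| ≤ δ * |a - b| := by
    rw [abs_mul, abs_of_pos (Real.exp_pos _)]
    have h1 := exp_sub_exp_le (δ * a) (δ * b)
    have hmax : max (δ * a) (δ * b) ≤ δ * c + δ * b := by
      rcases max_cases (δ * a) (δ * b) with ⟨he, _⟩ | ⟨he, _⟩ <;> rw [he]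
      · nlinarith
      · nlinarith
    have hexp : Real.exp (max (δ * a) (δ * b)) * Real.exp (-(δ * c) - δ * b) ≤ 1 := by
      rw [← Real.exp_add]
      rw [show (1:ℝ) = Real.exp 0 by simp]
      apply Real.exp_le_exp.mpr; linarith
    have habd : |δ * a - δ * b| = δ * |a - b| := by
      rw [show δ * a - δ * b = δ * (a - b) by ring, abs_mul, abs_of_nonneg hδ]
    calc |Real.exp (δ * a) - Real.exp (δ * b)| * Real.exp (-(δ * c) - δ * b)
        ≤ (|δ * a - δ * b| * Real.exp (max (δ * a) (δ * b))) *
            Real.exp (-(δ * c) - δ * b) := by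
          exact mul_le_mul_of_nonneg_right h1 (Real.exp_pos _).le
      _ = |δ * a - δ * b| *
            (Real.exp (max (δ * a) (δ * b)) * Real.exp (-(δ * c) - δ * b)) := by ring
      _ ≤ |δ * a - δ * b| * 1 := mul_le_mul_of_nonneg_left hexp (abs_nonneg _)
      _ = δ * |a - b| := by rw [mul_one, habd]
  -- step 2: δ|a-b| ≤ δ|ξ-η|/(a+b)
  have step2 : δ * |a - b| ≤ δ * |ξ - η| / (a + b) := by
    have hab : 0 < a + b := by linarith
    rw [le_div_iff₀ hab]
    have key : |a - b| * (a + b) ≤ |ξ - η| := by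
      have h1 : |a - b| * (a + b) = |a ^ 2 - b ^ 2| := by
        rw [← abs_of_pos hab, ← abs_mul]; ring_nf
      rw [h1, ha2, hb2]
      exact jap_lipschitz ξ η
    calc δ * |a - b| * (a + b) = δ * (|a - b| * (a + b)) := by ring
      _ ≤ δ * |ξ - η| := mul_le_mul_of_nonneg_left key hδ
  exact step1.trans step2
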